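/- Let f₀(τ) = Σ_{k=1}^∞ e^{√k/2} τ^k and g(t) = ln( μ_{f₀}(t)/(1−t) ) for t ∈ (1/2, 1). Then g is positive, continuous and increasing on (1/2,1) with lim_{t→1⁻} g(t) = +∞, so it has an inverse g⁻¹ : ℝ₊ → (1/2,1); moreover there exists t* ∈ (1/2,1) such that for all t ∈ (t*,1): g⁻¹(3 g(t)) − g⁻¹( g(t)/3 ) > 1 − g⁻¹(3 g(t)). -/

import Mathlib

open MeasureTheory Set Filter

/-- Maximal term of the power series with coefficients `a`. -/
noncomputable def maxTerm (a : ℕ → ℂ) (r : ℝ) : ℝ :=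
  ⨆ n : ℕ, ‖a n‖ * r ^ n

/-- Coefficients of `f₀(τ) = ∑_{k=1}^∞ e^{√k/2} τ^k`. -/
noncomputable def f0Coef : ℕ → ℂ := fun k =>
  if k = 0 then 0 else (Real.exp (Real.sqrt k / 2) : ℂ)

/-- `g(t) = ln(μ_{f₀}(t)/(1−t))`. -/
noncomputable def gFun (t : ℝ) : ℝ := Real.log (maxTerm f0Coef t / (1 - t))

lemma f0_abs (n : ℕ) : ‖f0Coef n‖ =
    if n = 0 then 0 else Real.exp (Real.sqrt n / 2) := by
  unfold f0Coef
  split <;> simp [Complex.norm_exp]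

lemma amgm {c x : ℝ} (hc : 0 < c) (hx : 0 ≤ x) :
    Real.sqrt x / 2 ≤ c * x + 1 / (16 * c) := by
  have h := two_mul_le_add_sq (Real.sqrt (c * x)) (Real.sqrt (1 / (16 * c)))
  have h1 : Real.sqrt (c * x) ^ 2 = c * x := Real.sq_sqrt (by positivity)
  have h2 : Real.sqrt (1 / (16 * c)) ^ 2 = 1 / (16 * c) := Real.sq_sqrt (by positivity)
  have h3 : Real.sqrt (c * x) * Real.sqrt (1 / (16 * c)) = Real.sqrt x / 4 := by
    rw [← Real.sqrt_mul (by positivity)]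
    have : c * x * (1 / (16 * c)) = x * (1/4)^2 := by field_simp; ring
    rw [this, Real.sqrt_mul hx, Real.sqrt_sq (by norm_num)]
    ring
  rw [mul_assoc, h3] at h
  linarith

/-- each term is at most exp(1/(16·(−log t))) for 0<t<1 -/
lemma term_le {t : ℝ} (ht0 : 0 < t) (ht1 : t < 1) (n : ℕ) :
    ‖f0Coef n‖ * t ^ n ≤ Real.exp (1 / (16 * (-Real.log t))) := by
  rw [f0_abs]
  rcases eq_or_ne n 0 with h | h
  · simp [h]; positivity
  · rw [if_neg h]
    have hlog : Real.log t < 0 := Real.log_neg ht0 ht1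
    have htn : t ^ n = Real.exp (n * Real.log t) := by
      rw [← Real.log_pow, Real.exp_log (by positivity)]
    rw [htn, ← Real.exp_add]
    apply Real.exp_le_exp.mpr
    have := amgm (c := -Real.log t) (x := (n : ℝ)) (by linarith) (by positivity)
    nlinarith [this]

lemma bdd (t : ℝ) (ht0 : 0 < t) (ht1 : t < 1) :
    BddAbove (Set.range fun n : ℕ => ‖f0Coef n‖ * t ^ n) :=
  ⟨Real.exp (1 / (16 * (-Real.log t))), by rintro x ⟨n, rfl⟩; exact term_le ht0 ht1 n⟩

lemma maxTerm_le {t : ℝ} (ht0 : 0 < t) (ht1 : t < 1) :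
    maxTerm f0Coef t ≤ Real.exp (1 / (16 * (-Real.log t))) :=
  ciSup_le (term_le ht0 ht1)

lemma le_maxTerm {t : ℝ} (ht0 : 0 < t) (ht1 : t < 1) (n : ℕ) :
    ‖f0Coef n‖ * t ^ n ≤ maxTerm f0Coef t :=
  le_ciSup (bdd t ht0 ht1) n

lemma maxTerm_pos {t : ℝ} (ht0 : 0 < t) (ht1 : t < 1) :
    Real.exp (1/2) * t ≤ maxTerm f0Coef t := by
  have := le_maxTerm ht0 ht1 1
  simpa [f0_abs] using this

lemma maxTerm_mono {s t : ℝ} (hs : 0 < s) (hst : s ≤ t) (ht1 : t < 1) :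
    maxTerm f0Coef s ≤ maxTerm f0Coef t := by
  apply ciSup_le
  intro n
  calc ‖f0Coef n‖ * s ^ n ≤ ‖f0Coef n‖ * t ^ n := by
        apply mul_le_mul_of_nonneg_left (pow_le_pow_left₀ hs.le hst n) (by positivity)
    _ ≤ maxTerm f0Coef t := le_maxTerm (lt_of_lt_of_le hs hst) ht1 n

lemma maxTerm_convex : ConvexOn ℝ (Set.Ioo (0:ℝ) 1) (maxTerm f0Coef) := by
  refine ⟨convex_Ioo 0 1, ?_⟩
  intro x hx y hy a b ha hb hab
  have hxy : a • x + b • y ∈ Set.Ioo (0:ℝ) 1 := (convex_Ioo 0 1) hx hy ha hb hab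
  apply ciSup_le
  intro n
  have hpow := (convexOn_pow (𝕜 := ℝ) n).2 (Set.mem_Ici.mpr hx.1.le)
    (Set.mem_Ici.mpr hy.1.le) ha hb hab
  calc ‖f0Coef n‖ * (a • x + b • y) ^ n
      ≤ ‖f0Coef n‖ * (a * x ^ n + b * y ^ n) := by
        apply mul_le_mul_of_nonneg_left _ (by positivity)
        simpa using hpow
    _ = a * (‖f0Coef n‖ * x ^ n) + b * (‖f0Coef n‖ * y ^ n) := by ring
    _ ≤ a * maxTerm f0Coef x + b * maxTerm f0Coef y := by
        apply add_le_add
        · exact mul_le_mul_of_nonneg_left (le_maxTerm hx.1 hx.2 n) ha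
        · exact mul_le_mul_of_nonneg_left (le_maxTerm hy.1 hy.2 n) hb

lemma maxTerm_continuousOn : ContinuousOn (maxTerm f0Coef) (Set.Ioo (0:ℝ) 1) :=
  maxTerm_convex.continuousOn isOpen_Ioo

lemma gFun_pos : ∀ t ∈ Set.Ioo (1/2 : ℝ) 1, 0 < gFun t := by
  rintro t ⟨ht0, ht1⟩
  have h0 : (0:ℝ) < t := by linarith
  have hm := maxTerm_pos h0 ht1
  have he : (1:ℝ) ≤ Real.exp (1/2) := by
    have := Real.add_one_le_exp (1/2 : ℝ); linarith
  apply Real.log_pos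
  rw [lt_div_iff₀ (by linarith)]
  nlinarith

lemma gFun_cont : ContinuousOn gFun (Set.Ioo (1/2 : ℝ) 1) := by
  have hsub : Set.Ioo (1/2 : ℝ) 1 ⊆ Set.Ioo (0:ℝ) 1 := by
    intro x hx; exact ⟨by linarith [hx.1], hx.2⟩
  apply ContinuousOn.log
  · apply ContinuousOn.div (maxTerm_continuousOn.mono hsub)
      (by fun_prop)
    rintro x ⟨hx0, hx1⟩; intro h; linarith [sub_eq_zero.mp h]
  · rintro x ⟨hx0, hx1⟩
    have h0 : (0:ℝ) < x := by linarith
    have h1 := maxTerm_pos h0 hx1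
    have he := Real.exp_pos (1/2 : ℝ)
    have hμ : 0 < maxTerm f0Coef x := by nlinarith
    exact ne_of_gt (div_pos hμ (by linarith))

lemma gFun_strictMono : StrictMonoOn gFun (Set.Ioo (1/2 : ℝ) 1) := by
  rintro s ⟨hs0, hs1⟩ t ⟨ht0, ht1⟩ hst
  have hs0' : (0:ℝ) < s := by linarith
  have hmus : 0 < maxTerm f0Coef s := by
    have := maxTerm_pos hs0' hs1; have := Real.exp_pos (1/2:ℝ); nlinarith
  apply Real.log_lt_log
  · exact div_pos hmus (by linarith)
  · rw [div_lt_div_iff₀ (by linarith) (by linarith)]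
    nlinarith [maxTerm_mono hs0' hst.le ht1]

lemma gFun_ge_log {t : ℝ} (ht : t ∈ Set.Ioo (1/2 : ℝ) 1) :
    Real.log (Real.exp (1/2) / 2) - Real.log (1 - t) ≤ gFun t := by
  obtain ⟨ht0, ht1⟩ := ht
  have h0 : (0:ℝ) < t := by linarith
  have hu : (0:ℝ) < 1 - t := by linarith
  have hμ := maxTerm_pos h0 ht1
  have he := Real.exp_pos (1/2 : ℝ)
  have hle : Real.exp (1/2) / 2 ≤ maxTerm f0Coef t := by nlinarith
  calc Real.log (Real.exp (1/2) / 2) - Real.log (1 - t)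
      = Real.log (Real.exp (1/2) / 2 / (1 - t)) := (Real.log_div (by positivity) (by positivity)).symm
    _ ≤ Real.log (maxTerm f0Coef t / (1 - t)) := by
        apply Real.log_le_log (by positivity)
        gcongr

lemma gFun_tendsto : Tendsto gFun (nhdsWithin 1 (Set.Iio 1)) atTop := by
  have h1 : Tendsto (fun t : ℝ => 1 - t) (nhdsWithin 1 (Set.Iio 1)) (nhdsWithin 0 (Set.Ioi 0)) := by
    apply tendsto_nhdsWithin_of_tendsto_nhds_of_eventually_within
    · have : Continuous (fun t : ℝ => 1 - t) := by continuity
      exact (this.tendsto' 1 0 (by norm_num)).mono_left nhdsWithin_le_nhds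
    · filter_upwards [self_mem_nhdsWithin] with t ht
      exact sub_pos.mpr (Set.mem_Iio.mp ht)
  have h2 : Tendsto (fun t : ℝ => Real.log (1 - t)) (nhdsWithin 1 (Set.Iio 1)) atBot :=
    Real.tendsto_log_nhdsGT_zero.comp h1
  have h3 : Tendsto (fun t : ℝ => Real.log (Real.exp (1/2) / 2) - Real.log (1 - t))
      (nhdsWithin 1 (Set.Iio 1)) atTop := by
    apply Filter.tendsto_atTop_add_const_left
    exact tendsto_neg_atBot_atTop.comp h2
  apply tendsto_atTop_mono' _ _ h3
  have hmem : Set.Ioo (1/2:ℝ) 1 ∈ nhdsWithin (1:ℝ) (Set.Iio 1) :=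
    Ioo_mem_nhdsLT_of_mem (by constructor <;> norm_num)
  filter_upwards [hmem] with t ht
  exact gFun_ge_log ht

lemma gFun_upper {s : ℝ} (h0 : 1 - 1/16384 ≤ s) (h1 : s < 1) :
    gFun s ≤ (5/64) / (1 - s) := by
  set u : ℝ := 1 - s with hu_def
  have hu0 : 0 < u := by simp [hu_def]; linarith
  have hu1 : u ≤ 1/16384 := by simp [hu_def]; linarith
  have hs0 : (0:ℝ) < s := by linarith
  have hsu : √u > 0 := Real.sqrt_pos.mpr hu0
  have hc : u ≤ -Real.log s := by
    have := Real.log_le_sub_one_of_pos hs0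
    simp [hu_def]; linarith
  have hc0 : 0 < -Real.log s := lt_of_lt_of_le hu0 hc
  have hμ : maxTerm f0Coef s ≤ Real.exp (1 / (16 * (-Real.log s))) := maxTerm_le hs0 h1
  have hμ0 : 0 < maxTerm f0Coef s := by
    have := maxTerm_pos hs0 h1; have := Real.exp_pos (1/2:ℝ); nlinarith
  have hlogμ : Real.log (maxTerm f0Coef s) ≤ 1 / (16 * u) := by
    calc Real.log (maxTerm f0Coef s) ≤ 1 / (16 * (-Real.log s)) := by
          rw [Real.log_le_iff_le_exp hμ0]; exact hμ
      _ ≤ 1 / (16 * u) := by gcongr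
  -- bound on log(1/u)
  have hsq : √u * √u = u := Real.mul_self_sqrt hu0.le
  have hloginv : -Real.log u ≤ 2 * √u / u := by
    have h2 : Real.log (1/√u) ≤ 1/√u - 1 := Real.log_le_sub_one_of_pos (by positivity)
    have h3 : -Real.log u = 2 * Real.log (1/√u) := by
      rw [Real.log_div one_ne_zero (ne_of_gt hsu), Real.log_one, Real.log_sqrt hu0.le]
      ring
    have h5 : 1/√u = √u/u := by rw [div_eq_div_iff (ne_of_gt hsu) (ne_of_gt hu0), one_mul, hsq]
    rw [h3]
    calc 2 * Real.log (1/√u) ≤ 2 * (1/√u) := by linarith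
      _ = 2 * √u / u := by rw [h5]; ring
  have hsmall : 2 * √u / u ≤ (1/64) / u := by
    have : √u ≤ 1/128 := by
      rw [show (1:ℝ)/128 = √((1/128)^2) by rw [Real.sqrt_sq]; norm_num]
      apply Real.sqrt_le_sqrt; nlinarith
    gcongr; linarith
  have : gFun s = Real.log (maxTerm f0Coef s) - Real.log u := by
    rw [gFun, Real.log_div (ne_of_gt hμ0) (ne_of_gt hu0)]
  rw [this]
  have : (5:ℝ)/64/u = 1/(16*u) + (1/64)/u := by field_simp; ring
  rw [this]
  have h4 : -Real.log u ≤ (1/64)/u := le_trans hloginv hsmall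
  linarith

lemma gFun_lower {s : ℝ} (h0 : 1 - 1/16384 ≤ s) (h1 : s < 1) :
    (3/64) / (1 - s) ≤ gFun s := by
  obtain ⟨u, hu_def⟩ : ∃ u : ℝ, u = 1 - s := ⟨_, rfl⟩
  rw [show (1:ℝ) - s = u from hu_def.symm]
  have hu0 : 0 < u := by rw [hu_def]; linarith
  have hu1 : u ≤ 1/16384 := by rw [hu_def]; linarith
  have hs0 : (0:ℝ) < s := by linarith
  obtain ⟨v, hv_def⟩ : ∃ v : ℝ, v = u * (1 + 2*u) := ⟨_, rfl⟩
  have hv0 : 0 < v := by rw [hv_def]; positivity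
  -- −log s ≤ v
  have hc : -Real.log s ≤ v := by
    have h2 : Real.log (1/s) ≤ 1/s - 1 := Real.log_le_sub_one_of_pos (by positivity)
    have h3 : Real.log (1/s) = -Real.log s := by
      rw [one_div, Real.log_inv]
    have h4 : 1/s - 1 ≤ v := by
      rw [div_sub_one (ne_of_gt hs0), div_le_iff₀ hs0]
      have hs_eq : s = 1 - u := by rw [hu_def]; ring
      rw [hs_eq, hv_def]
      have hcube : 0 ≤ u*u*(1-2*u) := mul_nonneg (mul_nonneg hu0.le hu0.le) (by linarith)
      nlinarith [hcube]
    linarith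
  -- choose n
  obtain ⟨n, hn_def⟩ : ∃ n : ℕ, n = ⌈1/(16*v^2)⌉₊ := ⟨_, rfl⟩
  have hnpos : 0 < n := hn_def ▸ Nat.ceil_pos.mpr (by positivity)
  have hnge : 1/(16*v^2) ≤ (n:ℝ) := hn_def ▸ Nat.le_ceil _
  have hnle : (n:ℝ) ≤ 1/(16*v^2) + 1 := hn_def ▸ le_of_lt (Nat.ceil_lt_add_one (by positivity))
  have hsqn : 1/(4*v) ≤ Real.sqrt n := by
    have : (1:ℝ)/(16*v^2) = (1/(4*v))^2 := by field_simp; ring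
    calc (1:ℝ)/(4*v) = Real.sqrt ((1/(4*v))^2) := (Real.sqrt_sq (by positivity)).symm
      _ ≤ Real.sqrt n := Real.sqrt_le_sqrt (by rw [← this]; exact hnge)
  -- μ ≥ exp(√n/2 + n log s)
  have hμ0 : 0 < maxTerm f0Coef s := by
    have := maxTerm_pos hs0 h1; have := Real.exp_pos (1/2:ℝ); nlinarith
  have hterm : Real.exp (Real.sqrt n / 2 + n * Real.log s) ≤ maxTerm f0Coef s := by
    have := le_maxTerm hs0 h1 n
    rw [f0_abs, if_neg (Nat.pos_iff_ne_zero.mp hnpos)] at this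
    have hsn : s ^ n = Real.exp (n * Real.log s) := by
      rw [← Real.log_pow, Real.exp_log (by positivity)]
    rwa [hsn, ← Real.exp_add] at this
  have hlogμ : Real.sqrt n / 2 + n * Real.log s ≤ Real.log (maxTerm f0Coef s) :=
    (Real.le_log_iff_exp_le hμ0).mpr hterm
  -- lower bound the exponent
  have hexp : 1/(16*v) - v ≤ Real.sqrt n / 2 + n * Real.log s := by
    have h5 : -((n:ℝ) * v) ≤ (n:ℝ) * Real.log s := by
      have : -v ≤ Real.log s := by linarith
      have hn0 : (0:ℝ) < n := by exact_mod_cast hnpos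
      nlinarith
    have h6 : (n:ℝ) * v ≤ 1/(16*v) + v := by
      have := mul_le_mul_of_nonneg_right hnle hv0.le
      have heq : (1/(16*v^2) + 1) * v = 1/(16*v) + v := by field_simp
      linarith [heq ▸ this]
    have h8 : 1/(4*v)/2 = 1/(8*v) := by field_simp; ring
    have heq2 : 1/(8*v) - (1/(16*v)) = 1/(16*v) := by field_simp; ring
    have h9 : 1/(4*v)/2 ≤ Real.sqrt n / 2 := by linarith [hsqn]
    linarith [h5, h6, h8 ▸ h9, heq2]
  -- put together
  have hloggeq : 1/(16*v) - v ≤ Real.log (maxTerm f0Coef s) := le_trans hexp hlogμ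
  have hlogu : Real.log u ≤ 0 := Real.log_nonpos hu0.le (by linarith)
  have hgeq : gFun s = Real.log (maxTerm f0Coef s) - Real.log u := by
    rw [gFun, show (1:ℝ) - s = u from hu_def.symm,
      Real.log_div (ne_of_gt hμ0) (ne_of_gt hu0)]
  have hu2 : u^2 ≤ u/16384 := by
    calc u^2 = u*u := by ring
      _ ≤ u*(1/16384) := mul_le_mul_of_nonneg_left hu1 hu0.le
      _ = u/16384 := by ring
  have hule1 : u ≤ 1 := by linarith
  have hu3 : u^3 ≤ u^2 := pow_le_pow_of_le_one hu0.le hule1 (by norm_num)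
  have hu4 : u^4 ≤ u^2 := pow_le_pow_of_le_one hu0.le hule1 (by norm_num)
  have hu5 : u^5 ≤ u^2 := pow_le_pow_of_le_one hu0.le hule1 (by norm_num)
  have step : (3/4)*v ≤ u - 16*u*v^2 := by
    rw [hv_def]
    have hexpand : u - 16*u*(u*(1+2*u))^2 - (3/4)*(u*(1+2*u)) =
        u/4 - (3/2)*u^2 - 16*u^3 - 64*u^4 - 64*u^5 := by ring
    linarith [hexpand, hu2, hu3, hu4, hu5, hu0]
  have hfin : (3/64)/u ≤ 1/(16*v) - v := by
    rw [div_le_iff₀ hu0]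
    have hx0 : (0:ℝ) < 1/(16*v) := by positivity
    have prod := mul_le_mul_of_nonneg_right step hx0.le
    have hx2 : 16*u*v^2*(1/(16*v)) = u*v := by field_simp
    have hx3 : (3/4)*v*(1/(16*v)) = 3/64 := by field_simp; ring
    linarith [prod, hx2, hx3]
  rw [hgeq]
  linarith [hfin, hloggeq, hlogu]

lemma exists_preimage {t : ℝ} (ht : t ∈ Set.Ioo (1/2:ℝ) 1) {y : ℝ} (hy1 : gFun t ≤ y) :
    ∃ s ∈ Set.Ioo (1/2:ℝ) 1, gFun s = y := by
  have h1 : ∀ᶠ b in nhdsWithin (1:ℝ) (Set.Iio 1), y ≤ gFun b :=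
    gFun_tendsto.eventually_ge_atTop y
  have h2 : Set.Ioo t 1 ∈ nhdsWithin (1:ℝ) (Set.Iio 1) :=
    Ioo_mem_nhdsLT_of_mem ⟨ht.2, le_refl 1⟩
  obtain ⟨b, hby, hbt⟩ := (h1.and (eventually_of_mem h2 (fun x hx => hx))).exists
  have hcont : ContinuousOn gFun (Set.Icc t b) := by
    apply gFun_cont.mono
    intro x hx
    exact ⟨lt_of_lt_of_le ht.1 hx.1, lt_of_le_of_lt hx.2 hbt.2⟩
  obtain ⟨sx, hsx, hsxy⟩ := intermediate_value_Icc hbt.1.le hcont ⟨hy1, hby⟩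
  exact ⟨sx, ⟨lt_of_lt_of_le ht.1 hsx.1, lt_of_le_of_lt hsx.2 hbt.2⟩, hsxy⟩

open Classical in
noncomputable def ginvFun : ℝ → ℝ := fun y =>
  if h : ∃ s ∈ Set.Ioo (1/2:ℝ) 1, gFun s = y then h.choose else 3/4

lemma ginv_spec {y : ℝ} (h : ∃ s ∈ Set.Ioo (1/2:ℝ) 1, gFun s = y) :
    ginvFun y ∈ Set.Ioo (1/2:ℝ) 1 ∧ gFun (ginvFun y) = y := by
  rw [ginvFun, dif_pos h]
  exact ⟨h.choose_spec.1, h.choose_spec.2⟩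

theorem statement15 :
    (∀ t ∈ Set.Ioo (1/2 : ℝ) 1, 0 < gFun t) ∧
    ContinuousOn gFun (Set.Ioo (1/2 : ℝ) 1) ∧
    StrictMonoOn gFun (Set.Ioo (1/2 : ℝ) 1) ∧
    Tendsto gFun (nhdsWithin 1 (Set.Iio 1)) atTop ∧
    ∃ ginv : ℝ → ℝ, (∀ y, 0 < y → ginv y ∈ Set.Ioo (1/2 : ℝ) 1) ∧
      (∀ t ∈ Set.Ioo (1/2 : ℝ) 1, ginv (gFun t) = t) ∧
      ∃ tstar ∈ Set.Ioo (1/2 : ℝ) 1, ∀ t ∈ Set.Ioo tstar 1,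
        ginv (3 * gFun t) - ginv (gFun t / 3) > 1 - ginv (3 * gFun t) := by
  refine ⟨gFun_pos, gFun_cont, gFun_strictMono, gFun_tendsto, ginvFun, ?_, ?_, ?_⟩
  · intro y _
    rw [ginvFun]
    split
    · next h => exact h.choose_spec.1
    · exact ⟨by norm_num, by norm_num⟩
  · intro t ht
    have h : ∃ s ∈ Set.Ioo (1/2:ℝ) 1, gFun s = gFun t := ⟨t, ht, rfl⟩
    obtain ⟨h1, h2⟩ := ginv_spec h
    exact gFun_strictMono.injOn h1 ht h2
  · -- choose tstar
    obtain ⟨s₀, hs₀_def⟩ : ∃ x : ℝ, x = 1 - 1/16384 := ⟨_, rfl⟩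
    have hs₀ : s₀ ∈ Set.Ioo (1/2:ℝ) 1 := by rw [hs₀_def]; constructor <;> norm_num
    have hg₀ : 0 < gFun s₀ := gFun_pos s₀ hs₀
    have h1 : ∀ᶠ b in nhdsWithin (1:ℝ) (Set.Iio 1), 3 * gFun s₀ + 1 ≤ gFun b :=
      gFun_tendsto.eventually_ge_atTop _
    have h2 : Set.Ioo s₀ 1 ∈ nhdsWithin (1:ℝ) (Set.Iio 1) :=
      Ioo_mem_nhdsLT_of_mem ⟨hs₀.2, le_refl 1⟩
    obtain ⟨tstar, hts1, hts2⟩ := (h1.and (eventually_of_mem h2 (fun x hx => hx))).exists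
    have htstar : tstar ∈ Set.Ioo (1/2:ℝ) 1 := ⟨lt_trans hs₀.1 hts2.1, hts2.2⟩
    refine ⟨tstar, htstar, ?_⟩
    intro t ⟨htt1, htt2⟩
    have ht : t ∈ Set.Ioo (1/2:ℝ) 1 := ⟨lt_trans htstar.1 htt1, htt2⟩
    have hgt0 : 0 < gFun t := gFun_pos t ht
    have hgmono : gFun tstar < gFun t := gFun_strictMono htstar ht htt1
    have hgt_big : 3 * gFun s₀ < gFun t := by linarith
    -- A := ginv (3 * gFun t)
    have hexA : ∃ s ∈ Set.Ioo (1/2:ℝ) 1, gFun s = 3 * gFun t :=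
      exists_preimage hs₀ (by linarith)
    have hexB : ∃ s ∈ Set.Ioo (1/2:ℝ) 1, gFun s = gFun t / 3 :=
      exists_preimage hs₀ (by linarith)
    obtain ⟨hA1, hA2⟩ := ginv_spec hexA
    obtain ⟨hB1, hB2⟩ := ginv_spec hexB
    obtain ⟨A, hA_def⟩ : ∃ x : ℝ, x = ginvFun (3 * gFun t) := ⟨_, rfl⟩
    obtain ⟨B, hB_def⟩ : ∃ x : ℝ, x = ginvFun (gFun t / 3) := ⟨_, rfl⟩
    rw [← hA_def] at hA1 hA2
    rw [← hB_def] at hB1 hB2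
    rw [← hA_def, ← hB_def]
    -- A, B > s₀
    have hAs : s₀ < A := by
      by_contra h
      push_neg at h
      have := gFun_strictMono.monotoneOn hA1 hs₀ h
      rw [hA2] at this
      linarith
    have hBs : s₀ < B := by
      by_contra h
      push_neg at h
      have := gFun_strictMono.monotoneOn hB1 hs₀ h
      rw [hB2] at this
      linarith
    -- quantitative bounds at A and B
    rw [hs₀_def] at hAs hBs
    have hAup : gFun A ≤ (5/64) / (1 - A) := gFun_upper (by linarith) hA1.2
    have hBlow : (3/64) / (1 - B) ≤ gFun B := gFun_lower (by linarith) hB1.2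
    have h1A : (0:ℝ) < 1 - A := by linarith [hA1.2]
    have h1B : (0:ℝ) < 1 - B := by linarith [hB1.2]
    rw [hA2] at hAup
    rw [hB2] at hBlow
    rw [le_div_iff₀ h1A] at hAup
    rw [div_le_iff₀ h1B] at hBlow
    -- hAup : 3 * gFun t * (1 - A) ≤ 5/64,  hBlow : 3/64 ≤ gFun t / 3 * (1 - B)
    have key : 1 - B > 2 * (1 - A) := by nlinarith [hAup, hBlow, hgt0, h1A, h1B]
    linarith
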